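/- For fixed t ∈ (-1,1) and δ > 0, the power series Φ_t(u) = ∑_{y=1}^∞ Γ(δ+1)·Γ(y)/Γ(y+δ+1)·Q_y(t)·u^y (convergent for |u| < 1/3) satisfies the first-order linear ODE (1 - 2tu + u²)·Φ_t'(u) = t - u - δ·(u^{-1} - t)·Φ_t(u) with Φ_t(0) = 0. -/

import Mathlib

lemma sbase {q : ℝ} (h0 : 0 ≤ q) (h1 : q < 1) :
    Summable (fun n : ℕ => ((n : ℝ) + 1) * q ^ (n - 1)) := by
  rw [← summable_nat_add_iff 1]
  have h1' : ‖q‖ < 1 := by rwa [Real.norm_eq_abs, abs_of_nonneg h0]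
  have hs : Summable (fun n : ℕ => ((n : ℝ) + 2) * q ^ n) := by
    have h2 := (summable_pow_mul_geometric_of_norm_lt_one 1 h1').add
      ((summable_geometric_of_norm_lt_one h1').mul_left 2)
    apply h2.congr
    intro n; ring
  apply hs.congr
  intro n
  simp only [Nat.add_sub_cancel]
  push_cast; ring

set_option maxHeartbeats 3000000 in
theorem stmt_12 (δ : ℝ) (hδ : 0 < δ) (t : ℝ) (ht : t ∈ Set.Ioo (-1 : ℝ) 1)
    (Q : ℕ → ℝ → ℝ)
    (hQ0 : ∀ s, Q 0 s = 1)
    (hQ1 : ∀ s, Q 1 s = s)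
    (hrec : ∀ y : ℕ, 1 ≤ y → ∀ s : ℝ,
      (2 * y + δ) * s * Q y s = (y : ℝ) * Q (y + 1) s + ((y : ℝ) + δ) * Q (y - 1) s)
    (a : ℕ → ℝ)
    (ha0 : a 0 = 0)
    (ha : ∀ y : ℕ, 1 ≤ y →
      a y = Real.Gamma (δ + 1) * Real.Gamma y / Real.Gamma (y + δ + 1) * Q y t)
    (Φ : ℝ → ℝ)
    (hΦ : ∀ u : ℝ, Φ u = ∑' y : ℕ, a y * u ^ y) :
    (∀ u : ℝ, |u| < 1 / 3 → Summable (fun y : ℕ => a y * u ^ y)) ∧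
    Φ 0 = 0 ∧
    (∀ u : ℝ, |u| < 1 / 3 → u ≠ 0 →
      HasDerivAt Φ ((t - u - δ * (u⁻¹ - t) * Φ u) / (1 - 2 * t * u + u ^ 2)) u) := by
  set c : ℕ → ℝ := fun y => Real.Gamma (δ + 1) * Real.Gamma y / Real.Gamma ((y : ℝ) + δ + 1) with hc
  have hG1 : (0:ℝ) < Real.Gamma (δ + 1) := Real.Gamma_pos_of_pos (by linarith)
  have hc1 : c 1 = 1 / (δ + 1) := by
    have h2 : ((1:ℝ) + δ + 1) = (δ + 1) + 1 := by ring
    simp only [hc, Nat.cast_one, h2, Real.Gamma_add_one (by positivity : (δ:ℝ) + 1 ≠ 0),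
      Real.Gamma_one]
    field_simp
  have hup : ∀ y : ℕ, 1 ≤ y → (y : ℝ) * c y = ((y : ℝ) + δ + 1) * c (y + 1) := by
    intro y hy
    have hy0 : (0:ℝ) < y := by exact_mod_cast hy
    have e1 : ((y + 1 : ℕ) : ℝ) = (y : ℝ) + 1 := by push_cast; ring
    have e2 : Real.Gamma ((y:ℝ) + 1) = y * Real.Gamma y := Real.Gamma_add_one (ne_of_gt hy0)
    have e3 : Real.Gamma (((y:ℝ) + 1) + δ + 1) = ((y:ℝ) + δ + 1) * Real.Gamma ((y:ℝ) + δ + 1) := by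
      rw [show ((y:ℝ) + 1) + δ + 1 = ((y:ℝ) + δ + 1) + 1 by ring]
      exact Real.Gamma_add_one (by positivity)
    have hGy : (0:ℝ) < Real.Gamma ((y:ℝ) + δ + 1) := Real.Gamma_pos_of_pos (by positivity)
    simp only [hc, e1, e2, e3]
    field_simp
  have hdown : ∀ y : ℕ, 2 ≤ y → ((y : ℝ) + δ) * c y = ((y : ℝ) - 1) * c (y - 1) := by
    intro y hy
    have e1 : ((y - 1 : ℕ) : ℝ) = (y : ℝ) - 1 := by
      have : (1:ℕ) ≤ y := by omega
      push_cast [this]; ring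
    have hy1 : (0:ℝ) < (y:ℝ) - 1 := by
      have : (2:ℝ) ≤ y := by exact_mod_cast hy
      linarith
    have e2 : Real.Gamma ((y:ℝ)) = ((y:ℝ) - 1) * Real.Gamma ((y:ℝ) - 1) := by
      have h := Real.Gamma_add_one (ne_of_gt hy1)
      rw [sub_add_cancel] at h
      exact h
    have e3 : Real.Gamma ((y:ℝ) + δ + 1) = ((y:ℝ) + δ) * Real.Gamma ((y:ℝ) + δ) := by
      rw [show ((y:ℝ) + δ + 1) = ((y:ℝ) + δ) + 1 by ring]
      exact Real.Gamma_add_one (by positivity)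
    have e4 : ((y:ℝ) - 1) + δ + 1 = (y:ℝ) + δ := by ring
    have hGy : (0:ℝ) < Real.Gamma ((y:ℝ) + δ) := Real.Gamma_pos_of_pos (by positivity)
    simp only [hc, e1, e2, e3, e4]
    field_simp
  have hac : ∀ y, a y = c y * Q y t := by
    intro y
    cases y with
    | zero => simp [ha0, hc, Real.Gamma_zero]
    | succ n => rw [ha (n+1) (by omega), hc]
  have harec : ∀ y : ℕ, 1 ≤ y →
      (2*(y:ℝ)+δ)*t*(a y) = ((y:ℝ)+δ+1)*a (y+1) + ((y:ℝ)-1)*a (y-1)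
        + (if y = 1 then (1:ℝ) else 0) := by
    intro y hy
    by_cases h1 : y = 1
    · subst h1
      simp only [if_pos]
      have hr1 : (2+δ)*t*Q 1 t = Q 2 t + (1+δ) := by
        have h := hrec 1 le_rfl t
        push_cast at h
        rw [hQ0] at h
        linarith
      have hup1 : c 1 = (δ+2) * c 2 := by
        have h := hup 1 le_rfl
        push_cast at h
        linarith
      have hc1e : (1+δ) * c 1 = 1 := by rw [hc1]; field_simp; ring
      rw [hac 1, hac 2]
      push_cast
      linear_combination (c 1) * hr1 + (Q 2 t) * hup1 + hc1e
    · have h2 : 2 ≤ y := by omega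
      rw [if_neg h1]
      have hr' := hrec y hy t
      have hupY := hup y hy
      have hdownY := hdown y h2
      rw [hac y, hac (y+1), hac (y-1)]
      linear_combination (c y) * hr' + (Q (y+1) t) * hupY + (Q (y-1) t) * hdownY
  have ht1 : |t| < 1 := abs_lt.mpr ⟨ht.1, ht.2⟩
  have ha1 : a 1 = t / (δ + 1) := by
    rw [hac 1, hc1, hQ1]; ring
  have hbound : ∀ y, |a y| ≤ 3 ^ y := by
    have key : ∀ y : ℕ, |a y| ≤ 3 ^ y ∧ |a (y + 1)| ≤ 3 ^ (y + 1) := by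
      intro y
      induction y with
      | zero =>
        constructor
        · simp [ha0]
        · rw [ha1, abs_div, abs_of_pos (by positivity : (0:ℝ) < δ + 1)]
          rw [div_le_iff₀ (by positivity)]
          have h3 : (3:ℝ) ^ (0+1) = 3 := by norm_num
          rw [h3]
          nlinarith [abs_nonneg t]
      | succ n ih =>
        refine ⟨ih.2, ?_⟩
        have h := harec (n + 1) (by omega)
        push_cast at h
        have h3 : ((n:ℝ) + 1 + δ + 1) * a (n + 2) =
            (2 * ((n:ℝ) + 1) + δ) * t * a (n + 1) - ((n:ℝ) + 1 - 1) * a n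
              - (if n = 0 then (1:ℝ) else 0) := by
          have e2 : a (n + 1 + 1) = a (n + 2) := by norm_num
          rw [e2] at h
          linarith
        have hne : (0:ℝ) < (n:ℝ) + 1 + δ + 1 := by positivity
        have hp : (0:ℝ) < (3:ℝ) ^ n := by positivity
        have h1p : (1:ℝ) ≤ (3:ℝ) ^ n := one_le_pow₀ (by norm_num)
        have hX : |(2 * ((n:ℝ) + 1) + δ) * t * a (n + 1)| ≤
            (2 * ((n:ℝ) + 1) + δ) * (3 * 3 ^ n) := by
          rw [abs_mul, abs_mul, abs_of_pos (by positivity : (0:ℝ) < 2 * ((n:ℝ)+1) + δ)]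
          have h2 : |a (n+1)| ≤ 3 ^ (n+1) := ih.2
          rw [pow_succ] at h2
          have hta : |t| * |a (n+1)| ≤ 3 ^ n * 3 := by
            nlinarith [abs_nonneg (a (n+1)), abs_nonneg t]
          calc (2 * ((n:ℝ)+1)+δ) * |t| * |a (n+1)|
              = (2*((n:ℝ)+1)+δ) * (|t| * |a (n+1)|) := by ring
            _ ≤ (2*((n:ℝ)+1)+δ) * (3^n*3) := mul_le_mul_of_nonneg_left hta (by positivity)
            _ = (2*((n:ℝ)+1)+δ) * (3*3^n) := by ring
        have hY : |((n:ℝ) + 1 - 1) * a n| ≤ (n:ℝ) * 3 ^ n := by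
          rw [abs_mul]
          have : |((n:ℝ) + 1 - 1)| = (n:ℝ) := by
            rw [show ((n:ℝ) + 1 - 1) = (n:ℝ) by ring, abs_of_nonneg (Nat.cast_nonneg n)]
          rw [this]
          exact mul_le_mul_of_nonneg_left ih.1 (Nat.cast_nonneg n)
        have hZ : |(if n = 0 then (1:ℝ) else 0)| ≤ 1 := by split <;> simp
        have h4 : ((n:ℝ) + 1 + δ + 1) * |a (n + 2)| ≤
            (2 * ((n:ℝ) + 1) + δ) * (3 * 3 ^ n) + (n:ℝ) * 3 ^ n + 1 := by
          have e : ((n:ℝ) + 1 + δ + 1) * |a (n + 2)| = |((n:ℝ) + 1 + δ + 1) * a (n + 2)| := by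
            rw [abs_mul, abs_of_pos hne]
          rw [e, h3]
          calc |(2 * ((n:ℝ) + 1) + δ) * t * a (n + 1) - ((n:ℝ) + 1 - 1) * a n
                - (if n = 0 then (1:ℝ) else 0)|
              ≤ |(2 * ((n:ℝ) + 1) + δ) * t * a (n + 1) - ((n:ℝ) + 1 - 1) * a n|
                + |(if n = 0 then (1:ℝ) else 0)| := abs_sub _ _
            _ ≤ |(2 * ((n:ℝ) + 1) + δ) * t * a (n + 1)| + |((n:ℝ) + 1 - 1) * a n|
                + |(if n = 0 then (1:ℝ) else 0)| := by
                  have := abs_sub ((2 * ((n:ℝ) + 1) + δ) * t * a (n + 1)) (((n:ℝ) + 1 - 1) * a n)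
                  linarith
            _ ≤ (2 * ((n:ℝ) + 1) + δ) * (3 * 3 ^ n) + (n:ℝ) * 3 ^ n + 1 := by linarith
        have goal2 : |a (n + 2)| ≤ 9 * 3 ^ n := by
          nlinarith [abs_nonneg (a (n + 2))]
        calc |a (n + 1 + 1)| = |a (n + 2)| := by norm_num
          _ ≤ 9 * 3 ^ n := goal2
          _ = 3 ^ (n + 1 + 1) := by ring
    intro y; exact (key y).1
  -- Part 1
  have part1 : ∀ u : ℝ, |u| < 1 / 3 → Summable (fun y : ℕ => a y * u ^ y) := by
    intro u hu
    have hq1 : ‖3 * |u|‖ < 1 := by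
      rw [Real.norm_eq_abs, abs_of_nonneg (by positivity)]; linarith
    apply Summable.of_norm_bounded (summable_geometric_of_norm_lt_one hq1)
    intro n
    rw [Real.norm_eq_abs, abs_mul, abs_pow, mul_pow]
    exact mul_le_mul_of_nonneg_right (hbound n) (by positivity)
  refine ⟨part1, ?_, ?_⟩
  -- Part 2
  · rw [hΦ 0]
    have hz : ∀ n : ℕ, a n * (0:ℝ) ^ n = 0 := by
      intro n
      cases n with
      | zero => simp [ha0]
      | succ m => simp
    rw [tsum_congr hz]
    exact tsum_zero
  -- Part 3
  · intro u hu hu0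
    have hu1 : |u| ≤ 1 := by linarith
    have hupos : 0 < |u| := abs_pos.mpr hu0
    set q : ℝ := 3 * |u| with hqdef
    have hq0 : 0 ≤ q := by positivity
    have hq1 : q < 1 := by rw [hqdef]; linarith
    have Sb : Summable (fun n : ℕ => ((n : ℝ) + 1) * q ^ (n - 1)) := sbase hq0 hq1
    have master : ∀ (f : ℕ → ℝ) (C : ℝ),
        (∀ n : ℕ, |f n| ≤ C * (((n:ℝ) + 1) * q ^ (n - 1))) → Summable f := by
      intro f C hC
      exact Summable.of_norm_bounded (Sb.mul_left C)
        (fun n => by rw [Real.norm_eq_abs]; exact hC n)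
    have hqnn : ∀ n : ℕ, (0:ℝ) ≤ q ^ n := fun n => pow_nonneg hq0 n
    have hqn : ∀ n : ℕ, (3:ℝ) ^ n * |u| ^ n = q ^ n := fun n => (mul_pow 3 |u| n).symm
    have hqpow : ∀ n : ℕ, q ^ n ≤ q ^ (n - 1) := by
      intro n
      cases n with
      | zero => simp
      | succ m =>
        simp only [Nat.add_sub_cancel]
        calc q ^ (m+1) = q ^ m * q := pow_succ q m
          _ ≤ q ^ m * 1 := mul_le_mul_of_nonneg_left (le_of_lt hq1) (hqnn m)
          _ = q ^ m := mul_one _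
    have haun : ∀ n : ℕ, |a n| * |u| ^ n ≤ q ^ n := by
      intro n
      rw [← hqn]
      exact mul_le_mul_of_nonneg_right (hbound n) (by positivity)
    have key1 : ∀ n : ℕ, |a n| * |u| ^ (n - 1) ≤ 3 * q ^ (n - 1) := by
      intro n
      cases n with
      | zero => simp [ha0]
      | succ m =>
        simp only [Nat.add_sub_cancel]
        calc |a (m+1)| * |u| ^ m ≤ 3 ^ (m+1) * |u| ^ m :=
            mul_le_mul_of_nonneg_right (hbound (m+1)) (by positivity)
          _ = 3 * (3 ^ m * |u| ^ m) := by ring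
          _ = 3 * q ^ m := by rw [hqn]
    have key4 : ∀ n : ℕ, |a n| * |u| ^ (n + 1) ≤ q ^ n := by
      intro n
      calc |a n| * |u| ^ (n+1) = (|a n| * |u| ^ n) * |u| := by ring
        _ ≤ q ^ n * 1 := by
            apply mul_le_mul (haun n) hu1 (abs_nonneg u)
            exact hqnn n
        _ = q ^ n := mul_one _
    -- summabilities
    have S1 : Summable (fun n : ℕ => a n * u ^ n) := part1 u hu
    have SD : Summable (fun n : ℕ => a n * ((n:ℝ) * u ^ (n - 1))) := by
      apply master _ 3
      intro n
      have e : |a n * ((n:ℝ) * u ^ (n-1))| = (n:ℝ) * (|a n| * |u| ^ (n-1)) := by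
        rw [abs_mul, abs_mul, abs_pow, Nat.abs_cast]; ring
      rw [e]
      nlinarith [mul_le_mul_of_nonneg_left (key1 n) (Nat.cast_nonneg (α := ℝ) n),
        hqnn (n-1), pow_le_pow_left₀ hq0 (le_of_lt hq1) (n-1)]
    have SA : Summable (fun n : ℕ => ((n:ℝ) + δ) * a n * u ^ (n - 1)) := by
      apply master _ (3 * (1 + δ))
      intro n
      have e : |((n:ℝ) + δ) * a n * u ^ (n-1)| = ((n:ℝ) + δ) * (|a n| * |u| ^ (n-1)) := by
        rw [abs_mul, abs_mul, abs_pow, abs_of_pos (by positivity : (0:ℝ) < (n:ℝ) + δ)]; ring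
      rw [e]
      have h1 := mul_le_mul_of_nonneg_left (key1 n) (by positivity : (0:ℝ) ≤ (n:ℝ) + δ)
      calc ((n:ℝ) + δ) * (|a n| * |u| ^ (n-1)) ≤ ((n:ℝ) + δ) * (3 * q ^ (n-1)) := h1
        _ ≤ ((1 + δ) * ((n:ℝ) + 1)) * (3 * q ^ (n-1)) := by
            apply mul_le_mul_of_nonneg_right _ (by positivity)
            nlinarith [mul_nonneg hδ.le (Nat.cast_nonneg (α := ℝ) n)]
        _ = 3 * (1 + δ) * (((n:ℝ) + 1) * q ^ (n-1)) := by ring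
    have SB : Summable (fun n : ℕ => t * (2 * (n:ℝ) + δ) * a n * u ^ n) := by
      apply master _ (2 + δ)
      intro n
      have e : |t * (2 * (n:ℝ) + δ) * a n * u ^ n|
          = |t| * ((2 * (n:ℝ) + δ) * (|a n| * |u| ^ n)) := by
        rw [abs_mul, abs_mul, abs_mul, abs_pow,
          abs_of_pos (by positivity : (0:ℝ) < 2 * (n:ℝ) + δ)]; ring
      rw [e]
      have h1 : |a n| * |u| ^ n ≤ q ^ (n-1) := (haun n).trans (hqpow n)
      have h2 := mul_le_mul_of_nonneg_left h1 (by positivity : (0:ℝ) ≤ 2 * (n:ℝ) + δ)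
      have h3 : |t| * ((2 * (n:ℝ) + δ) * (|a n| * |u| ^ n))
          ≤ 1 * ((2 * (n:ℝ) + δ) * (|a n| * |u| ^ n)) := by
        apply mul_le_mul_of_nonneg_right (le_of_lt ht1)
        positivity
      calc |t| * ((2 * (n:ℝ) + δ) * (|a n| * |u| ^ n))
          ≤ 1 * ((2 * (n:ℝ) + δ) * (|a n| * |u| ^ n)) := h3
        _ = (2 * (n:ℝ) + δ) * (|a n| * |u| ^ n) := one_mul _
        _ ≤ (2 * (n:ℝ) + δ) * q ^ (n-1) := mul_le_mul_of_nonneg_left h1 (by positivity)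
        _ ≤ ((2 + δ) * ((n:ℝ) + 1)) * q ^ (n-1) := by
            apply mul_le_mul_of_nonneg_right _ (pow_nonneg hq0 _)
            nlinarith [mul_nonneg hδ.le (Nat.cast_nonneg (α := ℝ) n)]
        _ = (2 + δ) * (((n:ℝ) + 1) * q ^ (n-1)) := by ring
    have SC : Summable (fun n : ℕ => (n:ℝ) * a n * u ^ (n + 1)) := by
      apply master _ 1
      intro n
      have e : |(n:ℝ) * a n * u ^ (n+1)| = (n:ℝ) * (|a n| * |u| ^ (n+1)) := by
        rw [abs_mul, abs_mul, abs_pow, Nat.abs_cast]; ring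
      rw [e]
      have h1 := mul_le_mul_of_nonneg_left (key4 n) (Nat.cast_nonneg (α := ℝ) n)
      calc (n:ℝ) * (|a n| * |u| ^ (n+1)) ≤ (n:ℝ) * q ^ n := h1
        _ ≤ (n:ℝ) * q ^ (n-1) := mul_le_mul_of_nonneg_left (hqpow n) (Nat.cast_nonneg n)
        _ ≤ ((n:ℝ) + 1) * q ^ (n-1) := by
            apply mul_le_mul_of_nonneg_right _ (pow_nonneg hq0 _)
            linarith
        _ = 1 * (((n:ℝ) + 1) * q ^ (n-1)) := by ring
    have SA2 : Summable (fun m : ℕ => ((m:ℝ) + 1 + δ) * a (m + 1) * u ^ m) := by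
      apply master _ (3 * (1 + δ))
      intro m
      have e : |((m:ℝ) + 1 + δ) * a (m+1) * u ^ m| = ((m:ℝ) + 1 + δ) * (|a (m+1)| * |u| ^ m) := by
        rw [abs_mul, abs_mul, abs_pow, abs_of_pos (by positivity : (0:ℝ) < (m:ℝ) + 1 + δ)]; ring
      rw [e]
      have h1 : |a (m+1)| * |u| ^ m ≤ 3 * q ^ m := by
        have := key1 (m+1)
        simpa [Nat.add_sub_cancel] using this
      have h2 := mul_le_mul_of_nonneg_left h1 (by positivity : (0:ℝ) ≤ (m:ℝ) + 1 + δ)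
      calc ((m:ℝ) + 1 + δ) * (|a (m+1)| * |u| ^ m) ≤ ((m:ℝ) + 1 + δ) * (3 * q ^ m) := h2
        _ ≤ ((m:ℝ) + 1 + δ) * (3 * q ^ (m-1)) := by
            apply mul_le_mul_of_nonneg_left _ (by positivity)
            nlinarith [hqpow m]
        _ ≤ ((1 + δ) * ((m:ℝ) + 1)) * (3 * q ^ (m-1)) := by
            apply mul_le_mul_of_nonneg_right _ (by positivity)
            nlinarith [mul_nonneg hδ.le (Nat.cast_nonneg (α := ℝ) m)]
        _ = 3 * (1 + δ) * (((m:ℝ) + 1) * q ^ (m-1)) := by ring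
    have SC2 : Summable (fun m : ℕ =>
        if m = 0 then (0:ℝ) else ((m:ℝ) - 1) * a (m - 1) * u ^ m) := by
      apply master _ 1
      intro m
      cases m with
      | zero => simp [hqnn]
      | succ k =>
        simp only [Nat.succ_ne_zero, if_false, Nat.add_sub_cancel]
        have e : |((k:ℝ) + 1 - 1) * a k * u ^ (k+1)| = (k:ℝ) * (|a k| * |u| ^ (k+1)) := by
          rw [abs_mul, abs_mul, abs_pow,
            show ((k:ℝ) + 1 - 1) = (k:ℝ) by ring, abs_of_nonneg (Nat.cast_nonneg k)]
          ring
        push_cast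
        rw [e]
        have h1 := mul_le_mul_of_nonneg_left (key4 k) (Nat.cast_nonneg (α := ℝ) k)
        calc (k:ℝ) * (|a k| * |u| ^ (k+1)) ≤ (k:ℝ) * q ^ k := h1
          _ ≤ (((k:ℝ) + 1) + 1) * q ^ k := by
              apply mul_le_mul_of_nonneg_right _ (pow_nonneg hq0 _)
              linarith
          _ = 1 * ((((k:ℝ) + 1) + 1) * q ^ ((k+1) - 1)) := by
              rw [Nat.add_sub_cancel]; ring
    -- derivative of the sum
    set w : ℝ := (|u| + 1/3) / 2 with hwdef
    have hw0 : 0 < w := by positivity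
    have huw : |u| < w := by rw [hwdef]; linarith
    have hw3 : w < 1/3 := by rw [hwdef]; linarith
    have hqw0 : (0:ℝ) ≤ 3 * w := by positivity
    have hqw1 : 3 * w < 1 := by linarith
    have hU : Summable (fun n : ℕ => 3 * (((n:ℝ) + 1) * (3*w) ^ (n - 1))) :=
      (sbase hqw0 hqw1).mul_left 3
    have humem : u ∈ Metric.ball (0:ℝ) w := by
      rw [Metric.mem_ball, Real.dist_eq, sub_zero]; exact huw
    have hD : HasDerivAt (fun z : ℝ => ∑' n : ℕ, a n * z ^ n)
        (∑' n : ℕ, a n * ((n:ℝ) * u ^ (n - 1))) u := by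
      apply hasDerivAt_tsum_of_isPreconnected hU Metric.isOpen_ball
        (convex_ball (0:ℝ) w).isPreconnected
        (fun n y _ => (hasDerivAt_pow n y).const_mul (a n))
        ?_ humem S1 humem
      intro n y hy
      rw [Metric.mem_ball, Real.dist_eq, sub_zero] at hy
      rw [Real.norm_eq_abs, abs_mul, abs_mul, abs_pow, Nat.abs_cast]
      cases n with
      | zero => simp
      | succ m =>
        simp only [Nat.add_sub_cancel]
        push_cast
        have h1 : |a (m+1)| ≤ 3 ^ (m+1) := hbound (m+1)
        have h2 : |y| ^ m ≤ w ^ m := pow_le_pow_left₀ (abs_nonneg y) (le_of_lt hy) m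
        have hX : (0:ℝ) ≤ (3*w) ^ m := by positivity
        calc |a (m+1)| * (((m:ℝ)+1) * |y| ^ m)
            ≤ 3 ^ (m+1) * (((m:ℝ)+1) * w ^ m) := by
              apply mul_le_mul h1 (mul_le_mul_of_nonneg_left h2 (by positivity))
                (by positivity) (by positivity)
          _ = 3 * (((m:ℝ)+1) * (3*w) ^ m) := by rw [mul_pow]; ring
          _ ≤ 3 * ((((m:ℝ)+1)+1) * (3*w) ^ m) := by
              apply mul_le_mul_of_nonneg_left _ (by norm_num)
              apply mul_le_mul_of_nonneg_right _ hX
              linarith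
    set D : ℝ := ∑' n : ℕ, a n * ((n:ℝ) * u ^ (n - 1)) with hDdef
    have hΦfun : Φ = fun z : ℝ => ∑' n : ℕ, a n * z ^ n := funext hΦ
    have hDΦ : HasDerivAt Φ D u := by rw [hΦfun]; exact hD
    -- the algebraic identity
    set P : ℝ := 1 - 2 * t * u + u ^ 2 with hPdef
    have hP : 0 < P := by
      by_contra hcon
      push_neg at hcon
      rw [hPdef] at hcon
      have ht2 : t ^ 2 < 1 := by nlinarith [ht.1, ht.2]
      nlinarith [sq_nonneg (u - t)]
    have key : P * D + δ * (u⁻¹ - t) * Φ u = t - u := by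
      rw [hΦ u, hDdef]
      rw [← tsum_mul_left (a := P), ← tsum_mul_left (a := δ * (u⁻¹ - t))]
      rw [← Summable.tsum_add (SD.mul_left P) (S1.mul_left (δ * (u⁻¹ - t)))]
      have step1 : ∀ n : ℕ, P * (a n * ((n:ℝ) * u ^ (n - 1))) + δ * (u⁻¹ - t) * (a n * u ^ n)
          = ((n:ℝ) + δ) * a n * u ^ (n - 1) - t * (2 * (n:ℝ) + δ) * a n * u ^ n
            + (n:ℝ) * a n * u ^ (n + 1) := by
        intro n
        cases n with
        | zero => simp [ha0]
        | succ m =>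
          simp only [Nat.add_sub_cancel]
          rw [hPdef]
          push_cast
          field_simp
          ring
      rw [tsum_congr step1]
      have split1 : ∑' n : ℕ, (((n:ℝ) + δ) * a n * u ^ (n - 1)
            - t * (2 * (n:ℝ) + δ) * a n * u ^ n + (n:ℝ) * a n * u ^ (n + 1))
          = (∑' n : ℕ, ((n:ℝ) + δ) * a n * u ^ (n - 1))
            - (∑' n : ℕ, t * (2 * (n:ℝ) + δ) * a n * u ^ n)
            + (∑' n : ℕ, (n:ℝ) * a n * u ^ (n + 1)) := by
        rw [Summable.tsum_add (SA.sub SB) SC, Summable.tsum_sub SA SB]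
      rw [split1]
      have shift1 : (∑' n : ℕ, ((n:ℝ) + δ) * a n * u ^ (n - 1))
          = ∑' m : ℕ, ((m:ℝ) + 1 + δ) * a (m + 1) * u ^ m := by
        rw [Summable.tsum_eq_zero_add SA]
        simp only [Nat.cast_zero, zero_add, ha0, Nat.add_sub_cancel]
        rw [show δ * 0 * u ^ (0 - 1) = 0 by ring, zero_add]
        apply tsum_congr
        intro m
        push_cast
        ring
      have shift2 : (∑' n : ℕ, (n:ℝ) * a n * u ^ (n + 1))
          = ∑' m : ℕ, (if m = 0 then (0:ℝ) else ((m:ℝ) - 1) * a (m - 1) * u ^ m) := by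
        rw [Summable.tsum_eq_zero_add SC2]
        simp only [if_pos, Nat.succ_ne_zero, if_false, Nat.add_sub_cancel, zero_add]
        apply tsum_congr
        intro m
        push_cast
        ring
      rw [shift1, shift2]
      have recombine : (∑' m : ℕ, ((m:ℝ) + 1 + δ) * a (m + 1) * u ^ m)
            - (∑' m : ℕ, t * (2 * (m:ℝ) + δ) * a m * u ^ m)
            + (∑' m : ℕ, (if m = 0 then (0:ℝ) else ((m:ℝ) - 1) * a (m - 1) * u ^ m))
          = ∑' m : ℕ, (((m:ℝ) + 1 + δ) * a (m + 1) * u ^ m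
              - t * (2 * (m:ℝ) + δ) * a m * u ^ m
              + (if m = 0 then (0:ℝ) else ((m:ℝ) - 1) * a (m - 1) * u ^ m)) := by
        rw [Summable.tsum_add (SA2.sub SB) SC2, Summable.tsum_sub SA2 SB]
      rw [recombine]
      have hHval : ∀ m : ℕ, (((m:ℝ) + 1 + δ) * a (m + 1) * u ^ m
            - t * (2 * (m:ℝ) + δ) * a m * u ^ m
            + (if m = 0 then (0:ℝ) else ((m:ℝ) - 1) * a (m - 1) * u ^ m))
          = (if m = 0 then t else if m = 1 then -u else 0) := by
        intro m
        match m with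
        | 0 =>
          simp only [if_pos, Nat.cast_zero]
          rw [ha0, ha1]
          field_simp
          ring
        | 1 =>
          simp only [Nat.cast_one, show (1:ℕ) ≠ 0 by norm_num, if_false, if_pos]
          have h := harec 1 le_rfl
          simp only [if_pos, Nat.cast_one] at h
          rw [show (1:ℕ) - 1 = 0 from rfl, ha0]
          rw [show (1:ℕ) + 1 = 2 from rfl] at h ⊢
          have ha2 : (1 + δ + 1) * a 2 = (2 + δ) * t * a 1 - 1 := by
            rw [ha0] at h; linarith
          have : u ^ (1:ℕ) = u := pow_one u
          rw [this]
          linear_combination u * ha2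
        | (k+2) =>
          have h := harec (k+2) (by omega)
          rw [if_neg (by omega : (k+2) ≠ 1)] at h
          rw [if_neg (by omega : ¬ (k+2) = 0), if_neg (by omega : ¬ (k+2) = 1)]
          have e1 : (k+2) - 1 = k+1 := rfl
          rw [e1] at h ⊢
          have e2 : (k+2) + 1 = k+3 := rfl
          rw [e2] at h ⊢
          push_cast at h ⊢
          linear_combination (-(u ^ (k+2))) * h
      rw [tsum_congr hHval]
      rw [tsum_eq_sum (s := ({0, 1} : Finset ℕ)) (by
        intro b hb
        simp only [Finset.mem_insert, Finset.mem_singleton] at hb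
        push_neg at hb
        rw [if_neg hb.1, if_neg hb.2])]
      rw [Finset.sum_pair (by norm_num : (0:ℕ) ≠ 1)]
      norm_num
      ring
    have hfinal : (t - u - δ * (u⁻¹ - t) * Φ u) / (1 - 2 * t * u + u ^ 2) = D := by
      rw [div_eq_iff (by rw [← hPdef]; exact ne_of_gt hP), ← hPdef]
      linarith
    rw [← hfinal] at hDΦ
    exact hDΦ
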